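/- Let R be a ring and n ≥ 1 an integer. If the matrix ring Mₙ(R) is right ℵ₀-injective, then for every countably generated right R-submodule T of the right R-module Rⁿ (column vectors), every R-linear map T → R extends to an R-linear map Rⁿ → R. -/

import Mathlib

/-- A ring `R` is *right ℵ₀-injective* if every homomorphism of right `R`-modules
from a countably generated right ideal of `R` to `R` extends to a homomorphism of
right `R`-modules `R → R`. -/
def IsRightAleph0Injective (R : Type*) [Ring R] : Prop :=
  ∀ I : Submodule Rᵐᵒᵖ R,
    (∃ S : Set R, S.Countable ∧ Submodule.span Rᵐᵒᵖ S = I) →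
    ∀ f : I →ₗ[Rᵐᵒᵖ] R, ∃ g : R →ₗ[Rᵐᵒᵖ] R, ∀ x : I, g (x : R) = f x

section Aux

open MulOpposite Matrix

variable {R : Type*} [Ring R] {n : ℕ}

/-- The matrix whose `z`-th column is `v` and whose other columns vanish. -/
def colM (z : Fin n) (v : Fin n → R) : Matrix (Fin n) (Fin n) R :=
  Matrix.of fun i j => if j = z then v i else 0

/-- More generally, the matrix whose `j`-th column is `v` and other columns vanish. -/
def colMD (j : Fin n) (v : Fin n → R) : Matrix (Fin n) (Fin n) R :=
  Matrix.of fun i j' => if j' = j then v i else 0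

/-- The right ideal of matrices all of whose columns lie in `T`. -/
def colSub (T : Submodule Rᵐᵒᵖ (Fin n → R)) :
    Submodule (Matrix (Fin n) (Fin n) R)ᵐᵒᵖ (Matrix (Fin n) (Fin n) R) where
  carrier := {A | ∀ j, (fun i => A i j) ∈ T}
  add_mem' := fun hA hB j => T.add_mem (hA j) (hB j)
  zero_mem' := fun j => T.zero_mem
  smul_mem' := by
    intro c A hA j
    have key : (fun i => (c • A) i j)
        = ∑ k, op ((unop c) k j) • (fun i => A i k) := by
      funext i
      simp only [Finset.sum_apply]
      show (A * unop c) i j = _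
      rw [Matrix.mul_apply]
      rfl
    rw [key]
    exact Submodule.sum_mem _ fun k _ => Submodule.smul_mem _ _ (hA k)

/-- The `j`-th column of an element of `colSub T`, as an element of `T`. -/
def colT {T : Submodule Rᵐᵒᵖ (Fin n → R)} (A : colSub T) (j : Fin n) : T :=
  ⟨fun i => (A : Matrix (Fin n) (Fin n) R) i j, A.2 j⟩


variable (T : Submodule Rᵐᵒᵖ (Fin n → R))

lemma colT_add (A B : colSub T) (j : Fin n) :
    colT (A + B) j = colT A j + colT B j := Subtype.ext rfl

/-- The linear map `colSub T → Mₙ(R)` putting `f` of each column in row `z`. -/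
def colF (z : Fin n) (f : T →ₗ[Rᵐᵒᵖ] R) :
    colSub T →ₗ[(Matrix (Fin n) (Fin n) R)ᵐᵒᵖ] Matrix (Fin n) (Fin n) R where
  toFun A := Matrix.of fun i j => if i = z then f (colT A j) else 0
  map_add' A B := by
    ext i j
    by_cases hi : i = z
    · simp [hi, colT_add, Matrix.add_apply]
    · simp [hi, Matrix.add_apply]
  map_smul' c A := by
    ext i j
    show _ = (c • (Matrix.of fun i j => if i = z then f (colT A j) else 0)) i j
    show _ = ((Matrix.of fun i j => if i = z then f (colT A j) else 0) * unop c) i j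
    by_cases hi : i = z
    · have key : colT (c • A) j = ∑ k, op ((unop c) k j) • colT A k := by
        apply Subtype.ext
        rw [Submodule.coe_sum]
        funext i'
        simp only [Finset.sum_apply]
        show ((A : Matrix (Fin n) (Fin n) R) * unop c) i' j = _
        rw [Matrix.mul_apply]
        rfl
      subst hi
      simp only [Matrix.of_apply, key, map_sum, LinearMap.map_smul,
        Matrix.mul_apply, eq_self_iff_true, if_true]
      rfl
    · simp [hi, Matrix.mul_apply]

lemma colMD_mem_span (z : Fin n) (S : Set (Fin n → R))
    (v : Fin n → R) (hv : v ∈ Submodule.span Rᵐᵒᵖ S) (j : Fin n) :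
    colMD j v ∈ Submodule.span (Matrix (Fin n) (Fin n) R)ᵐᵒᵖ (colM z '' S) := by
  induction hv using Submodule.span_induction with
  | mem w hw =>
    have key : colMD j w = op (Matrix.single z j (1 : R)) • colM z w := by
      show _ = colM z w * Matrix.single z j (1 : R)
      ext i j'
      rw [Matrix.mul_apply]
      simp [colM, colMD, Matrix.single, ite_and, mul_ite, Finset.sum_ite_eq',
        eq_comm (a := j')]
    rw [key]
    exact Submodule.smul_mem _ _ (Submodule.subset_span ⟨w, hw, rfl⟩)
  | zero =>
    have : colMD j (0 : Fin n → R) = 0 := by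
      ext i j'; simp [colMD]
    rw [this]; exact Submodule.zero_mem _
  | add x y hx hy ihx ihy =>
    have : colMD j (x + y) = colMD j x + colMD j y := by
      ext i j'; by_cases hj : j' = j <;> simp [colMD, hj]
    rw [this]; exact Submodule.add_mem _ ihx ihy
  | smul a x hx ih =>
    have key : colMD j (a • x) = op (Matrix.single j j (unop a)) • colMD j x := by
      show _ = colMD j x * Matrix.single j j (unop a)
      ext i j'
      rw [Matrix.mul_apply]
      have : ∀ k, colMD j x i k * Matrix.single j j (unop a) k j'
          = if k = j then (if j' = j then x i * unop a else 0) else 0 := by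
        intro k
        simp only [colMD, Matrix.single, Matrix.of_apply]
        by_cases hk : k = j
        · by_cases hj : j' = j
          · simp [hk, hj]
          · simp [hk, hj, ne_comm.mp hj]
        · simp [hk]
      rw [Finset.sum_congr rfl fun k _ => this k]
      simp [colMD, Finset.sum_ite_eq']
    rw [key]
    exact Submodule.smul_mem _ _ ih

lemma colSub_eq_span (z : Fin n) (S : Set (Fin n → R))
    (hS : Submodule.span Rᵐᵒᵖ S = T) :
    colSub T = Submodule.span (Matrix (Fin n) (Fin n) R)ᵐᵒᵖ (colM z '' S) := by
  apply le_antisymm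
  · intro A hA
    have key : A = ∑ j, colMD j (fun i => A i j) := by
      ext i j'
      rw [Matrix.sum_apply]
      simp [colMD, Finset.sum_ite_eq']
    rw [key]
    refine Submodule.sum_mem _ fun j _ => ?_
    exact colMD_mem_span z S _ (hS ▸ hA j) j
  · rw [Submodule.span_le]
    rintro _ ⟨v, hv, rfl⟩
    intro j
    by_cases hj : j = z
    · have : (fun i => colM z v i j) = v := by funext i; simp [colM, hj]
      rw [this]
      exact hS ▸ Submodule.subset_span hv
    · have : (fun i => colM z v i j) = 0 := by funext i; simp [colM, hj]
      rw [this]; exact T.zero_mem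

end Aux

/-- If the matrix ring `Mₙ(R)` (`n ≥ 1`) is right ℵ₀-injective, then for every
countably generated right `R`-submodule `T` of `Rⁿ`, every right `R`-linear map
`T → R` extends to a right `R`-linear map `Rⁿ → R`. -/
theorem extend_of_matrix_isRightAleph0Injective (R : Type*) [Ring R]
    (n : ℕ) (hn : 1 ≤ n)
    (h : IsRightAleph0Injective (Matrix (Fin n) (Fin n) R)) :
    ∀ T : Submodule Rᵐᵒᵖ (Fin n → R),
      (∃ S : Set (Fin n → R), S.Countable ∧ Submodule.span Rᵐᵒᵖ S = T) →
      ∀ f : T →ₗ[Rᵐᵒᵖ] R,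
        ∃ g : (Fin n → R) →ₗ[Rᵐᵒᵖ] R, ∀ x : T, g (x : Fin n → R) = f x := by
  intro T hT f
  obtain ⟨S, hScount, hSspan⟩ := hT
  set z : Fin n := ⟨0, hn⟩ with hz
  obtain ⟨g, hg⟩ := h (colSub T)
    ⟨colM z '' S, hScount.image _, (colSub_eq_span T z S hSspan).symm⟩
    (colF T z f)
  have hgm : ∀ A : Matrix (Fin n) (Fin n) R, g A = g 1 * A := by
    intro A
    have h0 := g.map_smul (MulOpposite.op A) 1
    rw [show MulOpposite.op A • (1 : Matrix (Fin n) (Fin n) R) = A from one_mul A] at h0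
    exact h0
  refine ⟨{ toFun := fun v => ∑ j, g 1 z j * v j
            map_add' := by intro v w; simp [mul_add, Finset.sum_add_distrib]
            map_smul' := by
              intro r v
              show ∑ j, g 1 z j * (v j * MulOpposite.unop r)
                  = (∑ j, g 1 z j * v j) * MulOpposite.unop r
              simp [Finset.sum_mul, mul_assoc] }, ?_⟩
  intro x
  have hmem : colM z (x : Fin n → R) ∈ colSub T := by
    intro j
    by_cases hj : j = z
    · have : (fun i => colM z (x : Fin n → R) i j) = (x : Fin n → R) := by
        funext i; simp [colM, hj]
      rw [this]; exact x.2
    · have : (fun i => colM z (x : Fin n → R) i j) = 0 := by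
        funext i; simp [colM, hj]
      rw [this]; exact T.zero_mem
  have h1 := hg ⟨colM z (x : Fin n → R), hmem⟩
  have h2 : (g (colM z (x : Fin n → R))) z z = f x := by
    rw [h1]
    show (if z = z then f (colT (⟨colM z (x : Fin n → R), hmem⟩ : colSub T) z)
        else 0) = f x
    have hcol : colT (⟨colM z (x : Fin n → R), hmem⟩ : colSub T) z = x := by
      apply Subtype.ext
      funext i
      show colM z (x : Fin n → R) i z = _
      simp [colM]
    rw [if_pos rfl, hcol]
  show ∑ j, g 1 z j * (x : Fin n → R) j = f x
  rw [← h2, hgm (colM z (x : Fin n → R)), Matrix.mul_apply]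
  apply Finset.sum_congr rfl
  intro k _
  simp [colM]
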